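/- Let m, p, r be positive integers with p prime, gcd(p(r-1), m) = 1 and r^p ≡ 1 (mod m). Let N be a cyclic group of order m, M a subgroup of N, u ∈ N, and 0 ≤ s < s' ≤ p-1. If u^(r^s) and u^(r^{s'}) lie in the same coset of M in N, then u ∈ M (and hence u^(r^t) ∈ M for all t ∈ [0, p-1]). -/

import Mathlib

theorem stmt_1 (m p r : ℕ) (hm : 0 < m) (hp : 0 < p) (hr : 0 < r)
    (hpp : p.Prime) (hgcd : Nat.gcd (p * (r - 1)) m = 1) (hmod : r ^ p ≡ 1 [MOD m])
    (N : Type*) [Group N] [Fintype N] (y : N) (hcard : Fintype.card N = m)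
    (hgen : ∀ n : N, n ∈ Subgroup.zpowers y)
    (M : Subgroup N) (u : N) (s s' : ℕ) (hss : s < s') (hs' : s' ≤ p - 1)
    (h : u ^ (r ^ s) * (u ^ (r ^ s'))⁻¹ ∈ M) :
    u ∈ M ∧ ∀ t ≤ p - 1, u ^ (r ^ t) ∈ M := by
  suffices hu : u ∈ M by exact ⟨hu, fun t _ => M.pow_mem hu _⟩
  rcases eq_or_lt_of_le (show 1 ≤ m from hm) with hm1 | hm1
  · -- m = 1 : the group is trivial
    have hc1 : Fintype.card N = 1 := by omega
    have : Subsingleton N := Fintype.card_le_one_iff_subsingleton.mp (le_of_eq hc1)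
    have : u = 1 := Subsingleton.elim u 1
    rw [this]; exact M.one_mem
  · set d := s' - s with hd_def
    have hd : 0 < d := by omega
    have hdp : d < p := by omega
    have hrp1 : m ∣ r ^ p - 1 :=
      (Nat.modEq_iff_dvd' (Nat.one_le_pow _ _ hr)).mp hmod.symm
    -- r is coprime to m
    have hcr : Nat.Coprime r m := by
      have h1 : Nat.gcd r m ∣ r ^ p := dvd_pow (Nat.gcd_dvd_left _ _) hp.ne'
      have h2 : Nat.gcd r m ∣ r ^ p - 1 := (Nat.gcd_dvd_right r m).trans hrp1
      have h3 := Nat.dvd_sub h1 h2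
      rwa [Nat.sub_sub_self (Nat.one_le_pow _ _ hr), Nat.dvd_one] at h3
    -- r^d - 1 is coprime to m
    have hcd : Nat.Coprime (r ^ d - 1) m := by
      set g := Nat.gcd (r ^ d - 1) m with hg
      have hgm : g ∣ m := Nat.gcd_dvd_right _ _
      have hgd : r ^ d ≡ 1 [MOD g] :=
        ((Nat.modEq_iff_dvd' (Nat.one_le_pow _ _ hr)).mpr (Nat.gcd_dvd_left _ _)).symm
      have hgp : r ^ p ≡ 1 [MOD g] := (hmod.of_dvd hgm)
      have hcdp : Nat.Coprime d p :=
        (hpp.coprime_iff_not_dvd.mpr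
          (fun hdvd => absurd (Nat.le_of_dvd hd hdvd) (not_le.mpr hdp))).symm
      obtain ⟨x, -, hx⟩ := Nat.exists_mul_mod_eq_one_of_coprime hcdp hpp.one_lt
      have hdx : d * x = p * (d * x / p) + 1 := by
        conv_lhs => rw [← Nat.div_add_mod (d * x) p]
        rw [hx]
      have e1 : r ^ (d * x) ≡ 1 [MOD g] := by
        calc r ^ (d * x) = (r ^ d) ^ x := by rw [pow_mul]
          _ ≡ 1 ^ x [MOD g] := hgd.pow x
          _ = 1 := one_pow x
      have e2 : r ^ (d * x) ≡ r [MOD g] := by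
        calc r ^ (d * x) = (r ^ p) ^ (d * x / p) * r := by
              rw [← pow_mul, ← pow_succ, ← hdx]
          _ ≡ 1 ^ (d * x / p) * r [MOD g] := (hgp.pow _).mul_right r
          _ = r := by rw [one_pow, one_mul]
      have hr1 : r ≡ 1 [MOD g] := e2.symm.trans e1
      have hgr : g ∣ r - 1 := (Nat.modEq_iff_dvd' hr).mp hr1.symm
      have hfin : g ∣ Nat.gcd (p * (r - 1)) m :=
        Nat.dvd_gcd (hgr.trans (dvd_mul_left _ _)) hgm
      rw [hgcd, Nat.dvd_one] at hfin
      exact hfin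
    -- the exponent k = r^s' - r^s is coprime to m
    have hle : r ^ s ≤ r ^ s' := Nat.pow_le_pow_right hr hss.le
    have hksplit : r ^ s' - r ^ s = r ^ s * (r ^ d - 1) := by
      rw [Nat.mul_sub, mul_one, ← pow_add]
      congr 2
      omega
    have hk : Nat.Coprime (r ^ s' - r ^ s) m := by
      rw [hksplit]; exact (hcr.pow_left s).mul hcd
    -- u ^ k ∈ M
    have hkM : u ^ (r ^ s' - r ^ s) ∈ M := by
      have hi := M.inv_mem h
      rw [mul_inv_rev, inv_inv] at hi
      rwa [pow_sub u hle]
    -- invert k mod m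
    obtain ⟨c, -, hc⟩ := Nat.exists_mul_mod_eq_one_of_coprime hk hm1
    have hmc : (r ^ s' - r ^ s) * c ≡ 1 [MOD m] := by
      unfold Nat.ModEq
      rw [hc, Nat.mod_eq_of_lt hm1]
    have hdvd : orderOf u ∣ m := hcard ▸ orderOf_dvd_card
    have hmo : (r ^ s' - r ^ s) * c ≡ 1 [MOD orderOf u] := hmc.of_dvd hdvd
    have hu : u ^ ((r ^ s' - r ^ s) * c) = u := by
      have h2 : u ^ ((r ^ s' - r ^ s) * c) = u ^ 1 := pow_eq_pow_iff_modEq.mpr hmo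
      simpa using h2
    rw [← hu, pow_mul]
    exact M.pow_mem hkM c
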